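/- Let Υ = ½(|01⟩⟨01| + |10⟩⟨10|) and Υ' = (H ⊗ H) Υ (H ⊗ H), where H = (1/√2)[[1,1],[1,−1]] is the Hadamard matrix. Then R(Υ'; σ₁, −σ₁) = 1 and R(Υ'; σ₃, −σ₃) = 0, while R(Υ; σ₃, −σ₃) = 1 and R(Υ; σ₁, −σ₁) = 0. Consequently neither of the information structures Υ and Υ' is better than the other: there is a game for which Υ yields a strictly higher value than Υ', and a game for which Υ' yields a strictly higher value than Υ. -/

import Mathlib

open Matrix Kronecker BigOperators
open scoped ComplexOrder

/-- A density operator: positive semidefinite with trace 1. -/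
def IsDensity {ι : Type} [Fintype ι] (A : Matrix ι ι ℂ) : Prop :=
  A.PosSemidef ∧ A.trace = 1

/-- A POVM with `k` outcomes: positive semidefinite operators summing to the identity. -/
def IsPOVM {ι : Type} [Fintype ι] [DecidableEq ι] {k : ℕ}
    (D : Fin k → Matrix ι ι ℂ) : Prop :=
  (∀ i, (D i).PosSemidef) ∧ ∑ i, D i = 1

/-- Reindexing that aligns the tensor factors N⊗S⊗A⊗B with (N⊗B)⊗(S⊗A). -/
def reord {n s a b : ℕ} :
    (Fin n × Fin s) × (Fin a × Fin b) → (Fin n × Fin b) × (Fin s × Fin a) :=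
  fun p => ((p.1.1, p.2.2), (p.1.2, p.2.1))

/-- The expected payoff `tr((Φ ⊗ ρ)·(M ⊗ D))`, with tensor factors reordered so that
`M` acts on `H_N ⊗ H_B` and `D` acts on `H_S ⊗ H_A`. -/
noncomputable def payoff {n s a b : ℕ}
    (Φ : Matrix (Fin n × Fin s) (Fin n × Fin s) ℂ)
    (ρ : Matrix (Fin a × Fin b) (Fin a × Fin b) ℂ)
    (M : Matrix (Fin n × Fin b) (Fin n × Fin b) ℂ)
    (D : Matrix (Fin s × Fin a) (Fin s × Fin a) ℂ) : ℝ :=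
  (((Φ ⊗ₖ ρ) * ((M ⊗ₖ D).submatrix reord reord)).trace).re

/-- The value of the game `(ρ, M^1, …, M^k)` over the information structure `Φ`:
the maximal expected payoff over all strategies (POVMs on `H_S ⊗ H_A`). -/
noncomputable def Rval {n s a b k : ℕ}
    (Φ : Matrix (Fin n × Fin s) (Fin n × Fin s) ℂ)
    (ρ : Matrix (Fin a × Fin b) (Fin a × Fin b) ℂ)
    (M : Fin k → Matrix (Fin n × Fin b) (Fin n × Fin b) ℂ) : ℝ :=
  sSup {r : ℝ | ∃ D : Fin k → Matrix (Fin s × Fin a) (Fin s × Fin a) ℂ,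
    IsPOVM D ∧ r = ∑ i, payoff Φ ρ (M i) (D i)}

/-- `Φ` is better than `Ψ`: in every game (environment `ρ_AB` together with Hermitian
payoff observables `M^1, …, M^k` on `H_N ⊗ H_B`) the value over `Φ` is at least the
value over `Ψ`. -/
def Better {n s t : ℕ}
    (Φ : Matrix (Fin n × Fin s) (Fin n × Fin s) ℂ)
    (Ψ : Matrix (Fin n × Fin t) (Fin n × Fin t) ℂ) : Prop :=
  ∀ (a b k : ℕ) (ρ : Matrix (Fin a × Fin b) (Fin a × Fin b) ℂ)
    (M : Fin k → Matrix (Fin n × Fin b) (Fin n × Fin b) ℂ),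
    IsDensity ρ → (∀ i, (M i).IsHermitian) →
      Rval Ψ ρ M ≤ Rval Φ ρ M



/-- Value of the trivial-environment game given by Hermitian payoff observables
`M^1, …, M^k` on `H_N`, over the information structure `Φ` on `H_N ⊗ H_S`:
the maximum over POVMs `(D^1, …, D^k)` on `H_S` of `Σ_i tr(Φ·(M^i ⊗ D^i))`. -/
noncomputable def RvalTriv {n s k : ℕ}
    (Φ : Matrix (Fin n × Fin s) (Fin n × Fin s) ℂ)
    (M : Fin k → Matrix (Fin n) (Fin n) ℂ) : ℝ :=
  sSup {r : ℝ | ∃ D : Fin k → Matrix (Fin s) (Fin s) ℂ,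
    IsPOVM D ∧ r = ∑ i, ((Φ * (M i ⊗ₖ D i)).trace).re}

noncomputable section

/-- The standard basis vector `|01⟩` of `ℂ² ⊗ ℂ²`. -/
def e01 : Fin 2 × Fin 2 → ℂ := fun p => if p = (0, 1) then 1 else 0

/-- The standard basis vector `|10⟩` of `ℂ² ⊗ ℂ²`. -/
def e10 : Fin 2 × Fin 2 → ℂ := fun p => if p = (1, 0) then 1 else 0

/-- The singlet state
`Φ = ½(|01⟩⟨01| − |10⟩⟨01| − |01⟩⟨10| + |10⟩⟨10|)`. -/
def singlet : Matrix (Fin 2 × Fin 2) (Fin 2 × Fin 2) ℂ :=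
  (1 / 2 : ℂ) •
    (vecMulVec e01 e01 - vecMulVec e10 e01 - vecMulVec e01 e10 + vecMulVec e10 e10)

/-- The classically correlated state `Υ = ½(|01⟩⟨01| + |10⟩⟨10|)`. -/
def upsilon : Matrix (Fin 2 × Fin 2) (Fin 2 × Fin 2) ℂ :=
  (1 / 2 : ℂ) • (vecMulVec e01 e01 + vecMulVec e10 e10)

/-- The Pauli matrices `σ_0, σ_1, σ_2, σ_3`. -/
def pauli : Fin 4 → Matrix (Fin 2) (Fin 2) ℂ :=
  ![!![1, 0; 0, 1], !![0, 1; 1, 0], !![0, -Complex.I; Complex.I, 0], !![1, 0; 0, -1]]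

/-- The Hadamard matrix `H = (1/√2)[[1,1],[1,−1]]`. -/
def hada : Matrix (Fin 2) (Fin 2) ℂ :=
  ((Real.sqrt 2 : ℂ))⁻¹ • !![1, 1; 1, -1]

/-- `Υ' = (H ⊗ H) Υ (H ⊗ H)`. -/
def upsilon' : Matrix (Fin 2 × Fin 2) (Fin 2 × Fin 2) ℂ :=
  (hada ⊗ₖ hada) * upsilon * (hada ⊗ₖ hada)

/-! ### Auxiliary lemmas -/

lemma trace_up (M D : Matrix (Fin 2) (Fin 2) ℂ) :
    (upsilon * (M ⊗ₖ D)).trace = (M 0 0 * D 1 1 + M 1 1 * D 0 0) / 2 := by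
  simp [upsilon, Matrix.trace, Matrix.mul_apply, Fintype.sum_prod_type,
    Fin.sum_univ_two, vecMulVec_apply, e01, e10, Prod.ext_iff, kroneckerMap_apply]
  ring

lemma trace_up' (M D : Matrix (Fin 2) (Fin 2) ℂ) :
    (upsilon' * (M ⊗ₖ D)).trace =
      ((M 0 0 + M 1 1) * (D 0 0 + D 1 1) - (M 0 1 + M 1 0) * (D 0 1 + D 1 0)) / 4 := by
  have h2 : ((Real.sqrt 2 : ℝ) : ℂ) * ((Real.sqrt 2 : ℝ) : ℂ) = 2 := by
    rw [← Complex.ofReal_mul, Real.mul_self_sqrt (by norm_num)]; norm_num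
  have hne : ((Real.sqrt 2 : ℝ) : ℂ) ≠ 0 := by
    simp [Real.sqrt_ne_zero']
  simp [upsilon', upsilon, hada, Matrix.trace, Matrix.mul_apply, Fintype.sum_prod_type,
    Fin.sum_univ_two, vecMulVec_apply, e01, e10, Prod.ext_iff, kroneckerMap_apply]
  field_simp
  ring_nf
  rw [show ((Real.sqrt 2 : ℝ) : ℂ)^4 = (((Real.sqrt 2:ℝ):ℂ) * ((Real.sqrt 2:ℝ):ℂ))^2 by ring, h2]
  ring

lemma qre {D : Matrix (Fin 2) (Fin 2) ℂ} (hD : D.PosSemidef) (x : Fin 2 → ℂ) :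
    0 ≤ (star x ⬝ᵥ D.mulVec x).re := (Complex.nonneg_iff.mp ((posSemidef_iff_dotProduct_mulVec.mp hD).2 x)).1

lemma psd00 {D : Matrix (Fin 2) (Fin 2) ℂ} (hD : D.PosSemidef) : 0 ≤ (D 0 0).re := by
  simpa [dotProduct, mulVec, Fin.sum_univ_two] using qre hD ![1, 0]

lemma psd11 {D : Matrix (Fin 2) (Fin 2) ℂ} (hD : D.PosSemidef) : 0 ≤ (D 1 1).re := by
  simpa [dotProduct, mulVec, Fin.sum_univ_two] using qre hD ![0, 1]

lemma psdplus {D : Matrix (Fin 2) (Fin 2) ℂ} (hD : D.PosSemidef) :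
    0 ≤ (D 0 0).re + (D 0 1).re + (D 1 0).re + (D 1 1).re := by
  have h := qre hD ![1, 1]
  simp [dotProduct, mulVec, Fin.sum_univ_two] at h
  linarith [h]

lemma psdminus {D : Matrix (Fin 2) (Fin 2) ℂ} (hD : D.PosSemidef) :
    0 ≤ (D 0 0).re - (D 0 1).re - (D 1 0).re + (D 1 1).re := by
  have h := qre hD ![1, -1]
  simp [dotProduct, mulVec, Fin.sum_univ_two] at h
  linarith [h]

lemma psd_P0 : (!![(0:ℂ),0;0,1]).PosSemidef := by
  refine posSemidef_iff_dotProduct_mulVec.mpr ⟨?_, ?_⟩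
  · ext i j; fin_cases i <;> fin_cases j <;> simp [conjTranspose_apply]
  · intro x
    have : star x ⬝ᵥ (!![(0:ℂ),0;0,1]).mulVec x = star (x 1) * x 1 := by
      simp [dotProduct, mulVec, Fin.sum_univ_two]
    rw [this]; exact star_mul_self_nonneg _

lemma psd_P1 : (!![(1:ℂ),0;0,0]).PosSemidef := by
  refine posSemidef_iff_dotProduct_mulVec.mpr ⟨?_, ?_⟩
  · ext i j; fin_cases i <;> fin_cases j <;> simp [conjTranspose_apply]
  · intro x
    have : star x ⬝ᵥ (!![(1:ℂ),0;0,0]).mulVec x = star (x 0) * x 0 := by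
      simp [dotProduct, mulVec, Fin.sum_univ_two]
    rw [this]; exact star_mul_self_nonneg _

lemma half_nonneg : (0:ℂ) ≤ (1/2 : ℂ) := by
  rw [Complex.le_def]; norm_num

lemma psd_Hplus : ((1/2:ℂ) • !![(1:ℂ),1;1,1]).PosSemidef := by
  refine posSemidef_iff_dotProduct_mulVec.mpr ⟨?_, ?_⟩
  · ext i j; fin_cases i <;> fin_cases j <;> simp [conjTranspose_apply]
  · intro x
    have : star x ⬝ᵥ ((1/2:ℂ) • !![(1:ℂ),1;1,1]).mulVec x
        = (1/2 : ℂ) * (star (x 0 + x 1) * (x 0 + x 1)) := by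
      simp [dotProduct, mulVec, Fin.sum_univ_two, star_add]
      ring
    rw [this]
    exact mul_nonneg half_nonneg (star_mul_self_nonneg _)

lemma psd_Hminus : ((1/2:ℂ) • !![(1:ℂ),-1;-1,1]).PosSemidef := by
  refine posSemidef_iff_dotProduct_mulVec.mpr ⟨?_, ?_⟩
  · ext i j; fin_cases i <;> fin_cases j <;> simp [conjTranspose_apply]
  · intro x
    have : star x ⬝ᵥ ((1/2:ℂ) • !![(1:ℂ),-1;-1,1]).mulVec x
        = (1/2 : ℂ) * (star (x 0 - x 1) * (x 0 - x 1)) := by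
      simp [dotProduct, mulVec, Fin.sum_univ_two, star_sub]
      ring
    rw [this]
    exact mul_nonneg half_nonneg (star_mul_self_nonneg _)

/-! ### The four game values -/

lemma val_up_s3 : RvalTriv upsilon ![pauli 3, -pauli 3] = 1 := by
  apply IsGreatest.csSup_eq
  constructor
  · refine ⟨![!![(0:ℂ),0;0,1], !![(1:ℂ),0;0,0]], ⟨?_, ?_⟩, ?_⟩
    · intro i; fin_cases i
      · exact psd_P0
      · exact psd_P1
    · rw [Fin.sum_univ_two]
      ext i j; fin_cases i <;> fin_cases j <;> simp [one_apply]
    · rw [Fin.sum_univ_two]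
      simp only [Matrix.cons_val_zero, Matrix.cons_val_one, Matrix.head_cons]
      rw [trace_up, trace_up]
      simp [pauli]
      norm_num
  · rintro r ⟨D, ⟨hpsd, hsum⟩, rfl⟩
    rw [Fin.sum_univ_two]
    simp only [Matrix.cons_val_zero, Matrix.cons_val_one, Matrix.head_cons]
    rw [trace_up, trace_up]
    have h00 : ((D 0) 0 0).re + ((D 1) 0 0).re = 1 := by
      have h := congrArg (fun A => (A 0 0).re) hsum
      simpa [Fin.sum_univ_two, one_apply] using h
    have h11 : ((D 0) 1 1).re + ((D 1) 1 1).re = 1 := by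
      have h := congrArg (fun A => (A 1 1).re) hsum
      simpa [Fin.sum_univ_two, one_apply] using h
    have f1 := psd00 (hpsd 0); have f2 := psd00 (hpsd 1)
    have f3 := psd11 (hpsd 0); have f4 := psd11 (hpsd 1)
    simp [pauli, Complex.div_re, Complex.add_re, Complex.sub_re, Complex.mul_re]
    linarith

lemma val_up_s1 : RvalTriv upsilon ![pauli 1, -pauli 1] = 0 := by
  apply IsGreatest.csSup_eq
  constructor
  · refine ⟨![!![(0:ℂ),0;0,1], !![(1:ℂ),0;0,0]], ⟨?_, ?_⟩, ?_⟩
    · intro i; fin_cases i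
      · exact psd_P0
      · exact psd_P1
    · rw [Fin.sum_univ_two]
      ext i j; fin_cases i <;> fin_cases j <;> simp [one_apply]
    · rw [Fin.sum_univ_two]
      simp only [Matrix.cons_val_zero, Matrix.cons_val_one, Matrix.head_cons]
      rw [trace_up, trace_up]
      simp [pauli]
  · rintro r ⟨D, ⟨hpsd, hsum⟩, rfl⟩
    rw [Fin.sum_univ_two]
    simp only [Matrix.cons_val_zero, Matrix.cons_val_one, Matrix.head_cons]
    rw [trace_up, trace_up]
    simp [pauli]

lemma val_up'_s1 : RvalTriv upsilon' ![pauli 1, -pauli 1] = 1 := by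
  apply IsGreatest.csSup_eq
  constructor
  · refine ⟨![(1/2:ℂ) • !![(1:ℂ),-1;-1,1], (1/2:ℂ) • !![(1:ℂ),1;1,1]], ⟨?_, ?_⟩, ?_⟩
    · intro i; fin_cases i
      · exact psd_Hminus
      · exact psd_Hplus
    · rw [Fin.sum_univ_two]
      ext i j; fin_cases i <;> fin_cases j <;> simp [one_apply] <;> norm_num
    · rw [Fin.sum_univ_two]
      simp only [Matrix.cons_val_zero, Matrix.cons_val_one, Matrix.head_cons]
      rw [trace_up', trace_up']
      simp [pauli]
      norm_num
  · rintro r ⟨D, ⟨hpsd, hsum⟩, rfl⟩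
    rw [Fin.sum_univ_two]
    simp only [Matrix.cons_val_zero, Matrix.cons_val_one, Matrix.head_cons]
    rw [trace_up', trace_up']
    have h00 : ((D 0) 0 0).re + ((D 1) 0 0).re = 1 := by
      have h := congrArg (fun A => (A 0 0).re) hsum
      simpa [Fin.sum_univ_two, one_apply] using h
    have h11 : ((D 0) 1 1).re + ((D 1) 1 1).re = 1 := by
      have h := congrArg (fun A => (A 1 1).re) hsum
      simpa [Fin.sum_univ_two, one_apply] using h
    have f1 := psdplus (hpsd 0); have f2 := psdminus (hpsd 1)
    simp [pauli, Complex.div_re, Complex.add_re, Complex.sub_re, Complex.mul_re]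
    linarith

lemma val_up'_s3 : RvalTriv upsilon' ![pauli 3, -pauli 3] = 0 := by
  apply IsGreatest.csSup_eq
  constructor
  · refine ⟨![!![(0:ℂ),0;0,1], !![(1:ℂ),0;0,0]], ⟨?_, ?_⟩, ?_⟩
    · intro i; fin_cases i
      · exact psd_P0
      · exact psd_P1
    · rw [Fin.sum_univ_two]
      ext i j; fin_cases i <;> fin_cases j <;> simp [one_apply]
    · rw [Fin.sum_univ_two]
      simp only [Matrix.cons_val_zero, Matrix.cons_val_one, Matrix.head_cons]
      rw [trace_up', trace_up']
      simp [pauli]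
  · rintro r ⟨D, ⟨hpsd, hsum⟩, rfl⟩
    rw [Fin.sum_univ_two]
    simp only [Matrix.cons_val_zero, Matrix.cons_val_one, Matrix.head_cons]
    rw [trace_up', trace_up']
    simp [pauli]

/-! ### Bridging `Rval` with trivial environment and `RvalTriv` -/

def emb : Fin 2 → Fin 2 × Fin 1 := fun i => (i, 0)
def prj : Fin 2 × Fin 1 → Fin 2 := Prod.fst

lemma payoff_triv (Φ : Matrix (Fin 2 × Fin 2) (Fin 2 × Fin 2) ℂ)
    (M : Matrix (Fin 2) (Fin 2) ℂ) (D : Matrix (Fin 2 × Fin 1) (Fin 2 × Fin 1) ℂ) :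
    payoff Φ (1 : Matrix (Fin 1 × Fin 1) (Fin 1 × Fin 1) ℂ) (M.submatrix prj prj) D
      = ((Φ * (M ⊗ₖ (D.submatrix emb emb))).trace).re := by
  unfold payoff
  congr 1
  simp [Matrix.trace, Matrix.mul_apply, Fintype.sum_prod_type, Fin.sum_univ_two,
    Fin.sum_univ_one, reord, kroneckerMap_apply, submatrix_apply, one_apply, emb, prj]

lemma submatrix_one_emb :
    (1 : Matrix (Fin 2 × Fin 1) (Fin 2 × Fin 1) ℂ).submatrix emb emb = 1 := by
  have hinj : Function.Injective emb := fun a b h => congrArg Prod.fst h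
  ext i j
  simp only [submatrix_apply]
  by_cases h : i = j
  · subst h; simp
  · rw [one_apply_ne h, one_apply_ne (fun hc => h (hinj hc))]

lemma submatrix_one_prj :
    (1 : Matrix (Fin 2) (Fin 2) ℂ).submatrix prj prj = 1 := by
  ext i j
  have hiff : prj i = prj j ↔ i = j :=
    ⟨fun h => Prod.ext h (Subsingleton.elim _ _), fun h => congrArg prj h⟩
  simp only [submatrix_apply]
  by_cases h : i = j
  · subst h; simp
  · rw [one_apply_ne h, one_apply_ne (fun hc => h (hiff.mp hc))]

lemma rval_bridge (Φ : Matrix (Fin 2 × Fin 2) (Fin 2 × Fin 2) ℂ) {k : ℕ}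
    (M : Fin k → Matrix (Fin 2) (Fin 2) ℂ) :
    Rval Φ (1 : Matrix (Fin 1 × Fin 1) (Fin 1 × Fin 1) ℂ)
      (fun i => (M i).submatrix prj prj) = RvalTriv Φ M := by
  unfold Rval RvalTriv
  congr 1
  ext r
  constructor
  · rintro ⟨D, ⟨hpsd, hsum⟩, rfl⟩
    refine ⟨fun i => (D i).submatrix emb emb, ⟨fun i => (hpsd i).submatrix emb, ?_⟩, ?_⟩
    · have : (∑ i, (D i).submatrix emb emb) = (∑ i, D i).submatrix emb emb := by
        ext x y; simp [Matrix.sum_apply]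
      rw [this, hsum, submatrix_one_emb]
    · exact Finset.sum_congr rfl fun i _ => payoff_triv Φ (M i) (D i)
  · rintro ⟨D, ⟨hpsd, hsum⟩, rfl⟩
    refine ⟨fun i => (D i).submatrix prj prj, ⟨fun i => (hpsd i).submatrix prj, ?_⟩, ?_⟩
    · have : (∑ i, (D i).submatrix prj prj) = (∑ i, D i).submatrix prj prj := by
        ext x y; simp [Matrix.sum_apply]
      rw [this, hsum, submatrix_one_prj]
    · refine Finset.sum_congr rfl fun i _ => ?_
      rw [payoff_triv Φ (M i) ((D i).submatrix prj prj)]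
      have : ((D i).submatrix prj prj).submatrix emb emb = D i := by
        ext x y; simp [submatrix_apply, prj, emb]
      rw [this]

lemma one_density : IsDensity (1 : Matrix (Fin 1 × Fin 1) (Fin 1 × Fin 1) ℂ) := by
  refine ⟨Matrix.PosSemidef.one, ?_⟩
  simp [Matrix.trace_one]

lemma herm_s1 : ∀ i, ((fun i => ((![pauli 1, -pauli 1]) i).submatrix prj prj) i).IsHermitian := by
  intro i
  have h1 : (pauli 1).IsHermitian := by
    ext a b; fin_cases a <;> fin_cases b <;> simp [pauli, conjTranspose_apply]
  fin_cases i
  · simpa [Matrix.IsHermitian, conjTranspose_submatrix] using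
      congrArg (fun A => Matrix.submatrix A prj prj) h1
  · simp only [Matrix.cons_val_one, Matrix.head_cons]
    simpa [Matrix.IsHermitian, conjTranspose_submatrix] using
      congrArg (fun A => Matrix.submatrix (-A) prj prj) h1

lemma herm_s3 : ∀ i, ((fun i => ((![pauli 3, -pauli 3]) i).submatrix prj prj) i).IsHermitian := by
  intro i
  have h1 : (pauli 3).IsHermitian := by
    ext a b; fin_cases a <;> fin_cases b <;> simp [pauli, conjTranspose_apply]
  fin_cases i
  · simpa [Matrix.IsHermitian, conjTranspose_submatrix] using
      congrArg (fun A => Matrix.submatrix A prj prj) h1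
  · simp only [Matrix.cons_val_one, Matrix.head_cons]
    simpa [Matrix.IsHermitian, conjTranspose_submatrix] using
      congrArg (fun A => Matrix.submatrix (-A) prj prj) h1

/-! ### Main theorem -/

/-- `R(Υ'; σ₁, −σ₁) = 1`, `R(Υ'; σ₃, −σ₃) = 0`, `R(Υ; σ₃, −σ₃) = 1` and
`R(Υ; σ₁, −σ₁) = 0`; consequently neither of `Υ` and `Υ'` is better than the
other. -/
theorem upsilon_incomparable :
    RvalTriv upsilon' ![pauli 1, -pauli 1] = 1 ∧
    RvalTriv upsilon' ![pauli 3, -pauli 3] = 0 ∧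
    RvalTriv upsilon ![pauli 3, -pauli 3] = 1 ∧
    RvalTriv upsilon ![pauli 1, -pauli 1] = 0 ∧
    ¬ Better upsilon upsilon' ∧ ¬ Better upsilon' upsilon := by
  refine ⟨val_up'_s1, val_up'_s3, val_up_s3, val_up_s1, ?_, ?_⟩
  · intro hB
    have h := hB 1 1 2 (1 : Matrix (Fin 1 × Fin 1) (Fin 1 × Fin 1) ℂ)
      (fun i => ((![pauli 1, -pauli 1]) i).submatrix prj prj) one_density herm_s1
    rw [rval_bridge upsilon' ![pauli 1, -pauli 1],
        rval_bridge upsilon ![pauli 1, -pauli 1], val_up'_s1, val_up_s1] at h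
    linarith
  · intro hB
    have h := hB 1 1 2 (1 : Matrix (Fin 1 × Fin 1) (Fin 1 × Fin 1) ℂ)
      (fun i => ((![pauli 3, -pauli 3]) i).submatrix prj prj) one_density herm_s3
    rw [rval_bridge upsilon ![pauli 3, -pauli 3],
        rval_bridge upsilon' ![pauli 3, -pauli 3], val_up_s3, val_up'_s3] at h
    linarith
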